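/- Let b_1, …, b_m be integers, each at least 2 (m ≥ 1). Then the Hirzebruch–Jung continued fraction [[b_1, …, b_m, (2)^e]] (the sequence b_1, …, b_m followed by e copies of 2) converges, as e → ∞, to [[b_1, …, b_{m−1}, b_m − 1]]. -/

import Mathlib

/-- The Hirzebruch–Jung continued fraction `[[a₁, …, aₙ]]`, defined recursively by
`[[aₙ]] = aₙ` and `[[a₁, …, aₙ]] = a₁ - 1/[[a₂, …, aₙ]]`. The value on the empty
list is junk. -/
noncomputable def hj : List ℝ → ℝ
  | [] => 0
  | [a] => a
  | a :: b :: l => a - 1 / hj (b :: l)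

noncomputable def hjAux (l : List ℝ) (x : ℝ) : ℝ := l.foldr (fun b y => b - 1 / y) x

lemma hjAux_nil (x : ℝ) : hjAux [] x = x := rfl

lemma hjAux_cons (a : ℝ) (l : List ℝ) (x : ℝ) :
    hjAux (a :: l) x = a - 1 / hjAux l x := rfl

lemma hjAux_append (l₁ l₂ : List ℝ) (x : ℝ) :
    hjAux (l₁ ++ l₂) x = hjAux l₁ (hjAux l₂ x) := by
  simp [hjAux, List.foldr_append]

lemma hj_singleton (a : ℝ) : hj [a] = a := rfl

lemma hj_cons (a : ℝ) (l : List ℝ) (hl : l ≠ []) :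
    hj (a :: l) = a - 1 / hj l := by
  cases l with
  | nil => exact absurd rfl hl
  | cons b m => rfl

lemma hj_append (l t : List ℝ) (ht : t ≠ []) : hj (l ++ t) = hjAux l (hj t) := by
  induction l with
  | nil => simp [hjAux_nil]
  | cons a l ih =>
    rw [List.cons_append, hj_cons a (l ++ t) (by simp [ht]), ih, hjAux_cons]

lemma hjAux_ge_one (l : List ℝ) (hl : ∀ b ∈ l, (2 : ℝ) ≤ b) (x : ℝ) (hx : 1 ≤ x) :
    1 ≤ hjAux l x := by
  induction l with
  | nil => simpa [hjAux_nil]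
  | cons a l ih =>
    have h1 : 1 ≤ hjAux l x := ih fun b hb => hl b (List.mem_cons_of_mem _ hb)
    have ha : (2 : ℝ) ≤ a := hl a List.mem_cons_self
    have hpos : (0 : ℝ) < hjAux l x := lt_of_lt_of_le one_pos h1
    have : 1 / hjAux l x ≤ 1 := by
      rw [div_le_one hpos]; exact h1
    rw [hjAux_cons]; linarith

lemma hj_replicate (e : ℕ) :
    hj (List.replicate (e + 1) (2 : ℝ)) = ((e : ℝ) + 2) / ((e : ℝ) + 1) := by
  induction e with
  | zero => norm_num [hj]
  | succ k ih =>
    have : List.replicate (k + 2) (2 : ℝ) = 2 :: List.replicate (k + 1) 2 := rfl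
    rw [this, hj_cons _ _ (by simp), ih]
    have h1 : (k : ℝ) + 1 > 0 := by positivity
    have h2 : (k : ℝ) + 2 > 0 := by positivity
    push_cast
    field_simp
    ring

lemma tendsto_hjAux (l : List ℝ) (hl : ∀ b ∈ l, (2 : ℝ) ≤ b) {f : ℕ → ℝ} {x : ℝ}
    (hf : Filter.Tendsto f Filter.atTop (nhds x)) (hx : 1 ≤ x) :
    Filter.Tendsto (fun e => hjAux l (f e)) Filter.atTop (nhds (hjAux l x)) := by
  induction l with
  | nil => simpa [hjAux_nil]
  | cons a l ih =>
    have h1 : 1 ≤ hjAux l x := hjAux_ge_one l (fun b hb => hl b (List.mem_cons_of_mem _ hb)) x hx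
    have hne : hjAux l x ≠ 0 := by linarith
    have ihl := ih fun b hb => hl b (List.mem_cons_of_mem _ hb)
    simp only [hjAux_cons]
    exact Filter.Tendsto.sub tendsto_const_nhds
      (Filter.Tendsto.div tendsto_const_nhds ihl hne)

/-- If `b₁, …, b_m` are integers, each at least `2`, then `[[b₁, …, b_m, (2)^e]]`
converges, as `e → ∞`, to `[[b₁, …, b_{m-1}, b_m − 1]]`. -/
theorem hj_tendsto_replicate_two (bs : List ℕ) (hb : bs ≠ []) (h2 : ∀ x ∈ bs, 2 ≤ x) :
    Filter.Tendsto
      (fun e : ℕ => hj (bs.map (fun x => (x : ℝ)) ++ List.replicate e (2 : ℝ)))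
      Filter.atTop
      (nhds (hj (bs.dropLast.map (fun x => (x : ℝ)) ++ [(bs.getLast hb : ℝ) - 1]))) := by
  set L : List ℝ := bs.map (fun x => (x : ℝ)) with hL
  have hLb : ∀ b ∈ L, (2 : ℝ) ≤ b := by
    intro b hbm
    simp only [hL] at hbm
    simp at hbm
    obtain ⟨n, hn, rfl⟩ := hbm
    exact_mod_cast h2 n hn
  -- the limit equals hjAux L 1
  have hlim : hj (bs.dropLast.map (fun x => (x : ℝ)) ++ [(bs.getLast hb : ℝ) - 1])
      = hjAux L 1 := by
    rw [hj_append _ _ (by simp)]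
    have hsplit : L = bs.dropLast.map (fun x => (x : ℝ)) ++ [(bs.getLast hb : ℝ)] := by
      rw [hL]
      conv_lhs => rw [← List.dropLast_append_getLast hb]
      simp
    rw [hj_singleton, hsplit, hjAux_append]
    congr 1
    rw [hjAux_cons, hjAux_nil]
    norm_num
  rw [hlim]
  -- the tail sequence tends to 1
  have htail : Filter.Tendsto (fun e : ℕ => ((e : ℝ) + 1) / (e : ℝ))
      Filter.atTop (nhds 1) := by
    have h0 : Filter.Tendsto (fun e : ℕ => 1 + 1 / (e : ℝ)) Filter.atTop (nhds 1) := by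
      simpa using Filter.Tendsto.add (tendsto_const_nhds (x := (1 : ℝ)))
        tendsto_one_div_atTop_nhds_zero_nat
    refine h0.congr' ?_
    filter_upwards [Filter.eventually_ge_atTop 1] with e he
    have : (e : ℝ) ≠ 0 := Nat.cast_ne_zero.mpr (by omega)
    field_simp
  have hmain := tendsto_hjAux L hLb htail le_rfl
  refine hmain.congr' ?_
  filter_upwards [Filter.eventually_ge_atTop 1] with e he
  obtain ⟨k, rfl⟩ := Nat.exists_eq_add_of_le' he
  rw [hj_append _ _ (by simp), hj_replicate k]
  congr 1
  push_cast
  ring
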